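/- arXiv:1406.5263 — 9 statements merged into one kernel-verified Lean document; each statement's English description precedes it below -/
import Mathlib

section
/- For 0 ≤ a < 1 and N_t > 1, the largest eigenvalue of the N_t × N_t matrix R with entries R[i,j] = a^|i-j| satisfies λ_max(R) ≥ (1+a)/(1-a) − 2a(1 − a^(N_t))/(N_t (1−a)^2). -/
open Matrix Finset

noncomputable def expR (N : ℕ) (a : ℝ) : Matrix (Fin N) (Fin N) ℝ :=
  fun i j => a ^ (((i : ℤ) - (j : ℤ)).natAbs)

lemma refl_sum (a : ℝ) (N : ℕ) :
    ∑ j ∈ range N, a ^ (N - j) = a * ∑ j ∈ range N, a ^ j := by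
  rw [Finset.mul_sum, ← Finset.sum_range_reflect]
  apply Finset.sum_congr rfl
  intro j hj
  rw [Finset.mem_range] at hj
  rw [← pow_succ']
  congr 1
  omega

lemma sum_aux (a : ℝ) (ha : a ≠ 1) (N : ℕ) :
    ∑ i ∈ range N, ∑ j ∈ range N, a ^ (((i:ℤ)-(j:ℤ)).natAbs)
      = N*(1+a)/(1-a) - 2*a*(1-a^N)/(1-a)^2 := by
  induction N with
  | zero => simp
  | succ N ih =>
    have h1a : (1:ℝ) - a ≠ 0 := sub_ne_zero.mpr (Ne.symm ha)
    have ha1 : a - 1 ≠ 0 := sub_ne_zero.mpr ha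
    rw [Finset.sum_range_succ]
    have hin : ∀ i ∈ range N, ∑ j ∈ range (N+1), a ^ (((i:ℤ)-(j:ℤ)).natAbs)
        = (∑ j ∈ range N, a ^ (((i:ℤ)-(j:ℤ)).natAbs)) + a ^ (N - i) := by
      intro i hi
      rw [Finset.mem_range] at hi
      rw [Finset.sum_range_succ]
      congr 2
      omega
    rw [Finset.sum_congr rfl hin, Finset.sum_add_distrib, ih, refl_sum]
    have hlast : ∑ j ∈ range (N+1), a ^ ((((N:ℕ):ℤ)-(j:ℤ)).natAbs)
        = a * (∑ j ∈ range N, a ^ j) + 1 := by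
      rw [Finset.sum_range_succ, ← refl_sum]
      congr 1
      · apply Finset.sum_congr rfl
        intro j hj
        rw [Finset.mem_range] at hj
        congr 1
        omega
      · simp
    rw [hlast, geom_sum_eq ha]
    push_cast
    field_simp
    ring

lemma rayleigh_ones (N : ℕ) (A : Matrix (Fin N) (Fin N) ℝ) (hA : A.IsHermitian) :
    (fun _ => (1:ℝ)) ⬝ᵥ A *ᵥ (fun _ => (1:ℝ)) ≤ (⨆ i, hA.eigenvalues i) * N := by
  set x : Fin N → ℝ := fun _ => 1 with hx
  set U : Matrix (Fin N) (Fin N) ℝ := (hA.eigenvectorUnitary : Matrix (Fin N) (Fin N) ℝ) with hU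
  set y : Fin N → ℝ := x ᵥ* U with hy
  have hUU : U * star U = 1 := (Matrix.mem_unitaryGroup_iff).mp hA.eigenvectorUnitary.2
  have hstar : star U *ᵥ x = y := by
    rw [hy, ← Matrix.mulVec_transpose]
    congr 1
  have hnorm : ∑ i, (y i)^2 = (N : ℝ) := by
    have h2 : ∑ i, (y i)^2 = y ⬝ᵥ y := by simp [dotProduct, sq]
    rw [h2]
    nth_rewrite 2 [← hstar]
    rw [hy, ← Matrix.dotProduct_mulVec, Matrix.mulVec_mulVec, hUU, Matrix.one_mulVec]
    simp [hx, dotProduct]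
  have hquad : x ⬝ᵥ A *ᵥ x = ∑ i, hA.eigenvalues i * (y i)^2 := by
    nth_rewrite 1 [hA.spectral_theorem]
    rw [Unitary.conjStarAlgAut_apply]
    rw [← Matrix.mulVec_mulVec, ← Matrix.mulVec_mulVec, hstar,
      Matrix.dotProduct_mulVec, ← hy]
    simp [Matrix.mulVec_diagonal, dotProduct, sq]
    ring_nf
    apply Finset.sum_congr rfl
    intro i _
    ring
  rw [hquad, ← hnorm, Finset.mul_sum]
  apply Finset.sum_le_sum
  intro i _
  have hle : hA.eigenvalues i ≤ ⨆ j, hA.eigenvalues j :=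
    le_ciSup (Set.Finite.bddAbove (Set.finite_range _)) i
  nlinarith [sq_nonneg (y i)]

theorem stmt1 (N : ℕ) (hN : 1 < N) (a : ℝ) (ha0 : 0 ≤ a) (ha1 : a < 1)
    (hR : (expR N a).IsHermitian) :
    (1 + a) / (1 - a) - 2 * a * (1 - a ^ N) / (N * (1 - a) ^ 2) ≤ ⨆ i, hR.eigenvalues i := by
  have hNpos : (0:ℝ) < N := by positivity
  have h1a : (1:ℝ) - a ≠ 0 := sub_ne_zero.mpr (ne_of_gt (by linarith))
  have hquad : (fun _ => (1:ℝ)) ⬝ᵥ (expR N a) *ᵥ (fun _ => (1:ℝ))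
      = N*(1+a)/(1-a) - 2*a*(1-a^N)/(1-a)^2 := by
    rw [← sum_aux a (ne_of_lt ha1) N]
    simp only [dotProduct, Matrix.mulVec, expR, one_mul, mul_one]
    rw [← Fin.sum_univ_eq_sum_range
      (fun i => ∑ j ∈ range N, a ^ (((i:ℤ)-(j:ℤ)).natAbs)) N]
    apply Finset.sum_congr rfl
    intro i _
    rw [← Fin.sum_univ_eq_sum_range (fun j => a ^ ((((i:ℕ):ℤ)-(j:ℤ)).natAbs)) N]
  have hmain := rayleigh_ones N (expR N a) hR
  rw [hquad] at hmain
  rw [show (1 + a) / (1 - a) - 2 * a * (1 - a ^ N) / (N * (1 - a) ^ 2)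
      = (N*(1+a)/(1-a) - 2*a*(1-a^N)/(1-a)^2) / N by field_simp]
  rw [div_le_iff₀ hNpos]
  exact hmain
end

section
/- For 0 ≤ a < 1 and N_t ≥ 1, the smallest eigenvalue of the N_t × N_t matrix R with R[i,j] = a^|i-j| satisfies λ_min(R) ≤ (1−a)/(1+a) + 2a(1 − (−a)^(N_t))/(N_t (1+a)^2). -/
open Matrix Finset


lemma rayleigh_min {N : ℕ} [NeZero N] {A : Matrix (Fin N) (Fin N) ℝ} (hA : A.IsHermitian)
    (v : Fin N → ℝ) :
    (⨅ i, hA.eigenvalues i) * (v ⬝ᵥ v) ≤ v ⬝ᵥ (A *ᵥ v) := by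
  set U := (hA.eigenvectorUnitary : Matrix (Fin N) (Fin N) ℝ) with hUdef
  have hmem := hA.eigenvectorUnitary.2
  rw [Unitary.mem_iff] at hmem
  have hUU : U * Uᴴ = 1 := by
    rw [← Matrix.star_eq_conjTranspose]; exact hmem.2
  set w : Fin N → ℝ := Uᴴ *ᵥ v with hw
  have hA' : A = U * diagonal hA.eigenvalues * Uᴴ := by
    have := hA.spectral_theorem
    simpa [Matrix.star_eq_conjTranspose] using this
  have hAv : A *ᵥ v = (U * diagonal hA.eigenvalues * Uᴴ) *ᵥ v := by rw [← hA']
  have h1 : v ⬝ᵥ (A *ᵥ v) = ∑ k, hA.eigenvalues k * (w k)^2 := by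
    rw [hAv, ← mulVec_mulVec, ← mulVec_mulVec, dotProduct_mulVec]
    have hvU : v ᵥ* U = w := by
      rw [hw, conjTranspose_eq_transpose_of_trivial, mulVec_transpose]
    rw [hvU, dotProduct, hw]
    simp only [mulVec_diagonal]
    apply Finset.sum_congr rfl
    intro k _
    ring
  have h2 : v ⬝ᵥ v = ∑ k, (w k)^2 := by
    have hww : w ⬝ᵥ w = v ⬝ᵥ v := by
      nth_rewrite 2 [hw]
      rw [dotProduct_mulVec, conjTranspose_eq_transpose_of_trivial, vecMul_transpose,
        hw, mulVec_mulVec, hUU, one_mulVec]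
    rw [← hww, dotProduct]
    apply Finset.sum_congr rfl
    intro k _
    ring
  rw [h1, h2, Finset.mul_sum]
  apply Finset.sum_le_sum
  intro k _
  have hbdd : BddBelow (Set.range hA.eigenvalues) := Set.Finite.bddBelow (Set.finite_range _)
  have := ciInf_le hbdd k
  nlinarith [sq_nonneg (w k)]

lemma row_sum (b : ℝ) (N : ℕ) :
    (∑ i : Fin N, b ^ (((i : ℤ) - (N : ℤ)).natAbs)) * (1 - b) = b * (1 - b ^ N) := by
  have h1 : ∀ i : Fin N, (((i : ℤ) - (N : ℤ)).natAbs) = N - (i : ℕ) := by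
    intro i; have := i.isLt; omega
  have h2 : (∑ i : Fin N, b ^ (((i : ℤ) - (N : ℤ)).natAbs)) = ∑ k ∈ range N, b ^ (k + 1) := by
    rw [Fin.sum_univ_eq_sum_range (fun i => b ^ ((((i : ℕ) : ℤ) - (N : ℤ)).natAbs))]
    rw [← Finset.sum_range_reflect]
    apply Finset.sum_congr rfl
    intro k hk
    simp only [mem_range] at hk
    congr 1
    omega
  rw [h2]
  have h3 : ∑ k ∈ range N, b ^ (k + 1) = b * ∑ k ∈ range N, b ^ k := by
    rw [Finset.mul_sum]; apply Finset.sum_congr rfl; intro k _; ring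
  have h4 := geom_sum_mul b N
  rw [h3]
  linear_combination (-b) * h4

lemma big_sum (b : ℝ) : ∀ N : ℕ,
    (∑ i : Fin N, ∑ j : Fin N, b ^ (((i : ℤ) - (j : ℤ)).natAbs)) * (1 - b) ^ 2
      = N * (1 + b) * (1 - b) - 2 * b * (1 - b ^ N) := by
  intro N
  induction N with
  | zero => simp
  | succ n ih =>
    have hsplit : (∑ i : Fin (n+1), ∑ j : Fin (n+1), b ^ (((i : ℤ) - (j : ℤ)).natAbs))
        = (∑ i : Fin n, ∑ j : Fin n, b ^ (((i : ℤ) - (j : ℤ)).natAbs))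
          + 2 * (∑ i : Fin n, b ^ (((i : ℤ) - (n : ℤ)).natAbs)) + 1 := by
      rw [Fin.sum_univ_castSucc]
      simp only [Fin.sum_univ_castSucc]
      have hc : ∀ i : Fin n, ((i.castSucc : Fin (n+1)) : ℤ) = (i : ℤ) := by intro i; simp
      have hl : ((Fin.last n : Fin (n+1)) : ℤ) = (n : ℤ) := by simp
      simp only [hc, hl, sub_self, Int.natAbs_zero, pow_zero]
      have habs : ∀ i : Fin n, (((n : ℤ) - (i : ℤ)).natAbs) = (((i : ℤ) - (n : ℤ)).natAbs) := by
        intro i; omega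
      rw [Finset.sum_add_distrib]
      simp only [habs]
      ring
    have hrow := row_sum b n
    rw [hsplit]
    push_cast
    linear_combination ih + 2 * (1 - b) * hrow


theorem stmt4 (N : ℕ) (hN : 1 ≤ N) (a : ℝ) (ha0 : 0 ≤ a) (ha1 : a < 1)
    (hR : (expR N a).IsHermitian) :
    (⨅ i, hR.eigenvalues i) ≤ (1 - a) / (1 + a) + 2 * a * (1 - (-a) ^ N) / (N * (1 + a) ^ 2) := by
  haveI : NeZero N := ⟨by omega⟩
  set v : Fin N → ℝ := fun i => (-1 : ℝ) ^ (i : ℕ) with hv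
  have hvv : v ⬝ᵥ v = N := by
    rw [dotProduct]
    have : ∀ i : Fin N, v i * v i = 1 := by
      intro i; rw [hv]; simp [← pow_add, ← two_mul]
    simp only [this, Finset.sum_const, card_univ, Fintype.card_fin, nsmul_eq_mul, mul_one]
  set S : ℝ := ∑ i : Fin N, ∑ j : Fin N, (-a) ^ (((i : ℤ) - (j : ℤ)).natAbs) with hSdef
  have hRv : v ⬝ᵥ (expR N a *ᵥ v) = S := by
    rw [dotProduct, hSdef]
    apply Finset.sum_congr rfl
    intro i _
    rw [mulVec, dotProduct, Finset.mul_sum]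
    apply Finset.sum_congr rfl
    intro j _
    set n := (((i : ℤ) - (j : ℤ)).natAbs) with hn
    have hterm : v i * (expR N a i j * v j) = (-1 : ℝ) ^ ((i : ℕ) + (j : ℕ)) * a ^ n := by
      simp only [hv, expR, ← hn]; rw [pow_add]; ring
    have hpow : (-1 : ℝ) ^ ((i : ℕ) + (j : ℕ)) = (-1 : ℝ) ^ n := by
      have h2 : ((i : ℕ) + (j : ℕ)) % 2 = n % 2 := by rw [hn]; omega
      rcases Nat.even_or_odd ((i : ℕ) + (j : ℕ)) with h | h
      · have hne : Even n := by rw [Nat.even_iff] at *; omega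
        rw [h.neg_one_pow, hne.neg_one_pow]
      · have hno : Odd n := by rw [Nat.odd_iff] at *; omega
        rw [h.neg_one_pow, hno.neg_one_pow]
    rw [hterm, hpow, ← neg_pow]
  have hray := rayleigh_min hR v
  rw [hvv, hRv] at hray
  have hS : S * (1 + a) ^ 2 = N * (1 - a) * (1 + a) + 2 * a * (1 - (-a) ^ N) := by
    have := big_sum (-a) N
    rw [← hSdef] at this
    linear_combination this
  have hN0 : (0 : ℝ) < N := by positivity
  have h1a : (0 : ℝ) < 1 + a := by linarith
  calc (⨅ i, hR.eigenvalues i) ≤ S / N := by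
        rw [le_div_iff₀ hN0]; exact hray
    _ = (1 - a) / (1 + a) + 2 * a * (1 - (-a) ^ N) / (N * (1 + a) ^ 2) := by
        field_simp
        linear_combination hS
end

section
/- For 0 ≤ a < 1 and N_t ≥ 1, the Rayleigh quotient of R (with R[i,j] = a^|i-j|) at the normalized alternating vector f = (1/√N_t)(1, −1, 1, −1, ..., (−1)^(N_t−1)) equals (1−a)/(1+a) + 2a(1 − (−a)^(N_t))/(N_t (1+a)^2). -/
open Matrix Finset

lemma key (a : ℝ) (N : ℕ) :
    (∑ i : Fin N, ∑ j : Fin N, (-1 : ℝ) ^ (i : ℕ) * (-1 : ℝ) ^ (j : ℕ) * expR N a i j) * (1+a)^2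
    = N*(1-a)*(1+a) + 2*a*(1-(-a)^N) := by
  induction N with
  | zero => simp
  | succ n ih =>
    have hedge : ∀ i : Fin n,
        (-1:ℝ) ^ (i:ℕ) * (-1:ℝ) ^ n * a ^ (((i:ℤ) - (n:ℤ)).natAbs) = (-a) ^ (n - (i:ℕ)) := by
      intro i
      have hlt := i.isLt
      have h1 : ((i:ℤ) - (n:ℤ)).natAbs = n - (i:ℕ) := by omega
      have h2 : (i:ℕ) + n = (n - (i:ℕ)) + 2 * (i:ℕ) := by omega
      rw [h1, ← pow_add, h2, pow_add, pow_mul, neg_one_sq, one_pow, mul_one, ← neg_pow]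
    have hS : (∑ i : Fin (n+1), ∑ j : Fin (n+1), (-1 : ℝ) ^ (i : ℕ) * (-1 : ℝ) ^ (j : ℕ) * expR (n+1) a i j)
        = (∑ i : Fin n, ∑ j : Fin n, (-1 : ℝ) ^ (i : ℕ) * (-1 : ℝ) ^ (j : ℕ) * expR n a i j)
          + 2 * (∑ i : Fin n, (-a) ^ (n - (i:ℕ))) + 1 := by
      rw [Fin.sum_univ_castSucc]
      simp only [Fin.sum_univ_castSucc, Fin.coe_castSucc, Fin.val_last, expR]
      rw [Finset.sum_add_distrib]
      have hA : ∀ i : Fin n, (-1:ℝ) ^ (i:ℕ) * (-1:ℝ) ^ n * a ^ (((i:ℤ) - (n:ℤ)).natAbs)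
          = (-a) ^ (n - (i:ℕ)) := hedge
      have hB : ∀ j : Fin n, (-1:ℝ) ^ n * (-1:ℝ) ^ (j:ℕ) * a ^ (((n:ℤ) - (j:ℤ)).natAbs)
          = (-a) ^ (n - (j:ℕ)) := by
        intro j
        have := hedge j
        have hlt := j.isLt
        have h1 : ((n:ℤ) - (j:ℤ)).natAbs = ((j:ℤ) - (n:ℤ)).natAbs := by omega
        rw [h1, ← this]; ring
      rw [Finset.sum_congr rfl (fun i _ => hA i), Finset.sum_congr rfl (fun j _ => hB j)]
      simp only [sub_self, Int.natAbs_zero, pow_zero, mul_one, ← pow_add]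
      have : (-1:ℝ) ^ (n + n) = 1 := by
        rw [← two_mul, pow_mul, neg_one_sq, one_pow]
      rw [this]
      ring
    have hg : (∑ j ∈ Finset.range n, (-a) ^ j) * (-a - 1) = (-a) ^ n - 1 := geom_sum_mul _ _
    have hT : (∑ i : Fin n, (-a:ℝ) ^ (n - (i:ℕ))) = ∑ j ∈ Finset.range n, (-a) ^ (j+1) := by
      rw [show (∑ i : Fin n, (-a:ℝ) ^ (n - (i:ℕ))) = ∑ i ∈ Finset.range n, (-a) ^ (n - i) from Fin.sum_univ_eq_sum_range (fun i => (-a) ^ (n - i)) n]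
      rw [← Finset.sum_range_reflect]
      apply Finset.sum_congr rfl
      intro j hj
      simp only [Finset.mem_range] at hj
      congr 1
      omega
    rw [hS, hT]
    have hgs : (∑ j ∈ Finset.range n, (-a:ℝ) ^ (j+1)) = (-a) * ∑ j ∈ Finset.range n, (-a) ^ j := by
      rw [Finset.mul_sum]
      exact Finset.sum_congr rfl fun j _ => by ring
    rw [hgs]
    push_cast
    linear_combination ih + (2 * a * (1 + a)) * hg

theorem stmt5 (N : ℕ) (hN : 1 ≤ N) (a : ℝ) (ha0 : 0 ≤ a) (ha1 : a < 1) :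
    (∑ i : Fin N, ∑ j : Fin N, (-1 : ℝ) ^ (i : ℕ) * (-1 : ℝ) ^ (j : ℕ) * expR N a i j) / N =
      (1 - a) / (1 + a) + 2 * a * (1 - (-a) ^ N) / (N * (1 + a) ^ 2) := by
  have h1 : (1 + a) ≠ 0 := by positivity
  have hNe : (N:ℝ) ≠ 0 := by positivity
  have hk := key a N
  field_simp
  linear_combination hk
end

section
/- Define the gap g(a) = (1+a)(1 − a^(N−1))/(1−a) − [(1+a)/(1−a) − 2a(1 − a^N)/(N(1−a)^2)] for 0 ≤ a < 1 and fixed integer N > 1. Then g is monotonically increasing in a on [0,1). -/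
lemma key_s8 (n : ℕ) (a : ℝ) :
    (1 - a)^2 * ((∑ m ∈ Finset.range (n+1), 2*(m:ℝ)*a^m) + n*a^(n+1)) =
      2*a - (n+2)*a^(n+1) + n*a^(n+3) := by
  induction n with
  | zero => simp
  | succ k ih =>
    rw [Finset.sum_range_succ]
    push_cast
    push_cast at ih
    linear_combination ih

theorem stmt8 (N : ℕ) (hN : 1 < N) :
    MonotoneOn
      (fun a : ℝ =>
        (1 + a) * (1 - a ^ (N - 1)) / (1 - a) -
          ((1 + a) / (1 - a) - 2 * a * (1 - a ^ N) / (N * (1 - a) ^ 2)))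
      (Set.Ico (0 : ℝ) 1) := by
  obtain ⟨n, rfl⟩ : ∃ n, N = n + 2 := ⟨N - 2, by omega⟩
  have hmono : MonotoneOn
      (fun a : ℝ => ((∑ m ∈ Finset.range (n+1), 2*(m:ℝ)*a^m) + n*a^(n+1)) / (n+2))
      (Set.Ico (0:ℝ) 1) := by
    intro a ha b hb hab
    have h2 : (0:ℝ) < n + 2 := by positivity
    dsimp only
    gcongr <;> exact ha.1
  apply MonotoneOn.congr hmono
  intro a ha
  obtain ⟨ha0, ha1⟩ := ha
  have h1 : (1:ℝ) - a ≠ 0 := by intro h; nlinarith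
  have hk := key_s8 n a
  have hN2 : ((n:ℝ) + 2) ≠ 0 := by positivity
  show _ = _
  simp only []
  have e1 : n + 2 - 1 = n + 1 := rfl
  rw [e1]
  push_cast
  field_simp
  linear_combination hk
end

section
/- For 0 ≤ a < 1 and N ≥ 1, every eigenvalue λ of the N × N matrix R with R[i,j] = a^|i-j| satisfies (1−a)/(1+a) ≤ λ ≤ (1+a)/(1−a). -/
open Matrix Finset

namespace Stmt12Aux


lemma col (a : ℝ) (N j : ℕ) (hj : j < N) (u : ℕ → ℝ) :
    ∑ k ∈ range (N - 1), (u (k + 1) - a * u k) *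
      (a ^ (((k + 1 : ℕ) : ℤ) - (j : ℤ)).natAbs - a * a ^ (((k : ℕ) : ℤ) - (j : ℤ)).natAbs)
    = (1 - a ^ 2) * (u j - a ^ j * u 0) := by
  have hsub : range j ⊆ range (N - 1) := by
    apply Finset.range_subset_range.2; omega
  rw [← Finset.sum_subset hsub (fun k hk hk2 => ?_)]
  · have hcongr : ∀ k ∈ range j,
        (u (k + 1) - a * u k) *
          (a ^ (((k + 1 : ℕ) : ℤ) - (j : ℤ)).natAbs - a * a ^ (((k : ℕ) : ℤ) - (j : ℤ)).natAbs)
        = (1 - a ^ 2) * (a ^ (j - (k + 1)) * u (k + 1) - a ^ (j - k) * u k) := by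
      intro k hk
      have hk' : k < j := Finset.mem_range.1 hk
      have e1 : (((k + 1 : ℕ) : ℤ) - (j : ℤ)).natAbs = j - (k + 1) := by omega
      have e2 : (((k : ℕ) : ℤ) - (j : ℤ)).natAbs = j - k := by omega
      have e3 : j - k = (j - (k + 1)) + 1 := by omega
      rw [e1, e2, e3, pow_succ]
      ring
    rw [Finset.sum_congr rfl hcongr, ← Finset.mul_sum,
      Finset.sum_range_sub (fun k => a ^ (j - k) * u k) j]
    simp [Nat.sub_self]
  · have hk' : j ≤ k := by
      simp only [Finset.mem_range] at hk hk2; omega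
    have e1 : (((k + 1 : ℕ) : ℤ) - (j : ℤ)).natAbs = (k - j) + 1 := by omega
    have e2 : (((k : ℕ) : ℤ) - (j : ℤ)).natAbs = k - j := by omega
    rw [e1, e2, pow_succ]
    ring

lemma quad (a : ℝ) (N : ℕ) (hN : 1 ≤ N) (u y : ℕ → ℝ)
    (hy : ∀ k, y k = ∑ j ∈ range N, a ^ (((k : ℕ) : ℤ) - (j : ℤ)).natAbs * u j) :
    ∑ k ∈ range (N - 1), (u (k + 1) - a * u k) * (y (k + 1) - a * y k)
      + (1 - a ^ 2) * (u 0 * y 0)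
    = (1 - a ^ 2) * ∑ j ∈ range N, u j ^ 2 := by
  have h1 : ∀ k : ℕ, y (k + 1) - a * y k
      = ∑ j ∈ range N, (a ^ (((k + 1 : ℕ) : ℤ) - (j : ℤ)).natAbs
          - a * a ^ (((k : ℕ) : ℤ) - (j : ℤ)).natAbs) * u j := by
    intro k
    rw [hy, hy, Finset.mul_sum, ← Finset.sum_sub_distrib]
    exact Finset.sum_congr rfl fun j _ => by ring
  have key : ∑ k ∈ range (N - 1), (u (k + 1) - a * u k) * (y (k + 1) - a * y k)
      = ∑ j ∈ range N, (1 - a ^ 2) * (u j - a ^ j * u 0) * u j := by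
    calc ∑ k ∈ range (N - 1), (u (k + 1) - a * u k) * (y (k + 1) - a * y k)
        = ∑ k ∈ range (N - 1), ∑ j ∈ range N,
            (u (k + 1) - a * u k) *
              ((a ^ (((k + 1 : ℕ) : ℤ) - (j : ℤ)).natAbs
                - a * a ^ (((k : ℕ) : ℤ) - (j : ℤ)).natAbs) * u j) := by
          exact Finset.sum_congr rfl fun k _ => by rw [h1, Finset.mul_sum]
      _ = ∑ j ∈ range N, ∑ k ∈ range (N - 1),
            (u (k + 1) - a * u k) *
              ((a ^ (((k + 1 : ℕ) : ℤ) - (j : ℤ)).natAbs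
                - a * a ^ (((k : ℕ) : ℤ) - (j : ℤ)).natAbs) * u j) := Finset.sum_comm
      _ = ∑ j ∈ range N, (∑ k ∈ range (N - 1),
            (u (k + 1) - a * u k) *
              (a ^ (((k + 1 : ℕ) : ℤ) - (j : ℤ)).natAbs
                - a * a ^ (((k : ℕ) : ℤ) - (j : ℤ)).natAbs)) * u j := by
          refine Finset.sum_congr rfl fun j _ => ?_
          rw [Finset.sum_mul]
          exact Finset.sum_congr rfl fun k _ => by ring
      _ = ∑ j ∈ range N, (1 - a ^ 2) * (u j - a ^ j * u 0) * u j := by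
          refine Finset.sum_congr rfl fun j hj => ?_
          rw [col a N j (Finset.mem_range.1 hj) u]
  have hy0 : (1 - a ^ 2) * (u 0 * y 0) = ∑ j ∈ range N, (1 - a ^ 2) * (u 0 * (a ^ j * u j)) := by
    rw [hy]
    simp only [Finset.mul_sum]
    refine Finset.sum_congr rfl fun j _ => ?_
    have : (((0 : ℕ) : ℤ) - (j : ℤ)).natAbs = j := by omega
    rw [this]
  rw [key, hy0, ← Finset.sum_add_distrib, Finset.mul_sum]
  exact Finset.sum_congr rfl fun j _ => by ring



lemma B_bounds (a : ℝ) (ha0 : 0 ≤ a) (ha1 : a ≤ 1) (N : ℕ) (hN : 1 ≤ N) (u : ℕ → ℝ) :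
    (1 - a) ^ 2 * ∑ j ∈ range N, u j ^ 2
      ≤ ∑ k ∈ range (N - 1), (u (k + 1) - a * u k) ^ 2 + (1 - a ^ 2) * u 0 ^ 2
    ∧ ∑ k ∈ range (N - 1), (u (k + 1) - a * u k) ^ 2 + (1 - a ^ 2) * u 0 ^ 2
      ≤ (1 + a) ^ 2 * ∑ j ∈ range N, u j ^ 2 := by
  set S := ∑ j ∈ range N, u j ^ 2 with hS
  have eS : S = ∑ k ∈ range (N - 1), u (k + 1) ^ 2 + u 0 ^ 2 := by
    rw [hS, show N = (N - 1) + 1 by omega, Finset.sum_range_succ']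
    simp
  have hT : ∑ k ∈ range (N - 1), u k ^ 2 ≤ S := by
    apply Finset.sum_le_sum_of_subset_of_nonneg (Finset.range_subset_range.2 (by omega))
    intro j _ _; positivity
  have hTnn : 0 ≤ ∑ k ∈ range (N - 1), u k ^ 2 :=
    Finset.sum_nonneg fun k _ => sq_nonneg _
  have hub : ∑ k ∈ range (N - 1), (u (k + 1) - a * u k) ^ 2
      ≤ (1 + a) * ∑ k ∈ range (N - 1), u (k + 1) ^ 2
        + (a * (1 + a)) * ∑ k ∈ range (N - 1), u k ^ 2 := by
    rw [Finset.mul_sum, Finset.mul_sum, ← Finset.sum_add_distrib]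
    refine Finset.sum_le_sum fun k _ => ?_
    nlinarith [sq_nonneg (u (k + 1) + u k), sq_nonneg (u (k+1)), sq_nonneg (u k)]
  have hlb : (1 - a) * ∑ k ∈ range (N - 1), u (k + 1) ^ 2
        - (a * (1 - a)) * ∑ k ∈ range (N - 1), u k ^ 2
      ≤ ∑ k ∈ range (N - 1), (u (k + 1) - a * u k) ^ 2 := by
    rw [Finset.mul_sum, Finset.mul_sum, ← Finset.sum_sub_distrib]
    refine Finset.sum_le_sum fun k _ => ?_
    nlinarith [sq_nonneg (u (k + 1) - u k)]
  have hP : ∑ k ∈ range (N - 1), u (k + 1) ^ 2 = S - u 0 ^ 2 := by linarith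
  rw [hP] at hub hlb
  constructor
  · nlinarith [mul_le_mul_of_nonneg_left hT
      (mul_nonneg ha0 (by linarith : (0:ℝ) ≤ 1 - a)),
      mul_nonneg (mul_nonneg ha0 (by linarith : (0:ℝ) ≤ 1 - a)) (sq_nonneg (u 0))]
  · nlinarith [mul_le_mul_of_nonneg_left hT
      (mul_nonneg ha0 (by linarith : (0:ℝ) ≤ 1 + a)),
      mul_nonneg (mul_nonneg ha0 (by linarith : (0:ℝ) ≤ 1 + a)) (sq_nonneg (u 0))]

lemma eig (N : ℕ) (hN : 1 ≤ N) (a : ℝ) (ha0 : 0 ≤ a) (ha1 : a < 1)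
    (lam : ℝ) (v : Fin N → ℝ) (hvne : v ≠ 0)
    (hmul : expR N a *ᵥ v = lam • v) :
    (1 - a) / (1 + a) ≤ lam ∧ lam ≤ (1 + a) / (1 - a) := by
  classical
  set u : ℕ → ℝ := fun k => if h : k < N then v ⟨k, h⟩ else 0 with hu
  set y : ℕ → ℝ := fun k => ∑ j ∈ range N, a ^ (((k : ℕ) : ℤ) - (j : ℤ)).natAbs * u j with hydef
  have hufin : ∀ (j : Fin N), u j.val = v j := by
    intro j; simp [hu, j.isLt]
  have hyk : ∀ k, k < N → y k = lam * u k := by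
    intro k hk
    have h1 := congrFun hmul ⟨k, hk⟩
    have h2 : (expR N a *ᵥ v) ⟨k, hk⟩
        = ∑ j : Fin N, a ^ (((k : ℕ) : ℤ) - ((j : ℕ) : ℤ)).natAbs * v j := by
      simp [Matrix.mulVec, dotProduct, expR]
    have h3 : (lam • v) ⟨k, hk⟩ = lam * u k := by
      simp [Pi.smul_apply, smul_eq_mul, hu, hk]
    rw [h2, h3] at h1
    calc y k = ∑ j ∈ range N, a ^ (((k : ℕ) : ℤ) - (j : ℤ)).natAbs * u j := rfl
      _ = ∑ j : Fin N, a ^ (((k : ℕ) : ℤ) - (((j : ℕ)) : ℤ)).natAbs * u (j : ℕ) :=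
          (Fin.sum_univ_eq_sum_range (fun j => a ^ (((k : ℕ) : ℤ) - (j : ℤ)).natAbs * u j) N).symm
      _ = ∑ j : Fin N, a ^ (((k : ℕ) : ℤ) - (((j : ℕ)) : ℤ)).natAbs * v j :=
          Finset.sum_congr rfl fun j _ => by rw [hufin j]
      _ = lam * u k := h1
  -- positivity of S
  set S : ℝ := ∑ j ∈ range N, u j ^ 2 with hSdef
  have hSnn : 0 ≤ S := Finset.sum_nonneg fun j _ => sq_nonneg _
  have hSpos : 0 < S := by
    rcases lt_or_eq_of_le hSnn with h | h
    · exact h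
    · exfalso
      apply hvne
      funext j
      have hz : ∀ j ∈ range N, u j ^ 2 = 0 := by
        intro j hj
        have := (Finset.sum_eq_zero_iff_of_nonneg (fun j _ => sq_nonneg (u j))).1 h.symm
        exact this j hj
      have := hz j.val (Finset.mem_range.2 j.isLt)
      have huj : u j.val = 0 := by
        exact pow_eq_zero_iff (n := 2) (by norm_num) |>.1 this
      rw [hufin j] at huj
      exact huj
  -- the quadratic identity
  have hid := quad a N hN u y (fun k => rfl)
  set B : ℝ := ∑ k ∈ range (N - 1), (u (k + 1) - a * u k) ^ 2 + (1 - a ^ 2) * u 0 ^ 2 with hBdef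
  have hid2 : lam * B = (1 - a ^ 2) * S := by
    have e1 : ∑ k ∈ range (N - 1), (u (k + 1) - a * u k) * (y (k + 1) - a * y k)
        = lam * ∑ k ∈ range (N - 1), (u (k + 1) - a * u k) ^ 2 := by
      rw [Finset.mul_sum]
      refine Finset.sum_congr rfl fun k hk => ?_
      have hk' : k < N - 1 := Finset.mem_range.1 hk
      rw [hyk (k + 1) (by omega), hyk k (by omega)]
      ring
    have e2 : (1 - a ^ 2) * (u 0 * y 0) = lam * ((1 - a ^ 2) * u 0 ^ 2) := by
      rw [hyk 0 (by omega)]; ring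
    rw [e1, e2] at hid
    rw [hBdef]
    linarith [hid]
  obtain ⟨hBl, hBu⟩ := B_bounds a ha0 ha1.le N hN u
  rw [← hSdef, ← hBdef] at hBl hBu
  have ha1' : 0 < 1 - a := by linarith
  have ha1'' : 0 < 1 + a := by linarith
  have hBpos : 0 < B := by nlinarith [mul_pos (mul_pos ha1' ha1') hSpos]
  have hlam : 0 < lam := by
    have : lam = ((1 - a ^ 2) * S) / B := by
      rw [eq_div_iff (ne_of_gt hBpos)]; exact hid2
    rw [this]
    apply div_pos _ hBpos
    apply mul_pos _ hSpos
    nlinarith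
  constructor
  · rw [div_le_iff₀ ha1'']
    have h3 : (1 - a ^ 2) * S ≤ (lam * (1 + a) ^ 2) * S := by
      have := mul_le_mul_of_nonneg_left hBu hlam.le
      nlinarith [this, hid2]
    have h4 : 1 - a ^ 2 ≤ lam * (1 + a) ^ 2 := le_of_mul_le_mul_right h3 hSpos
    have h5 : (1 - a) * (1 + a) ≤ (lam * (1 + a)) * (1 + a) := by nlinarith [h4]
    linarith [le_of_mul_le_mul_right h5 ha1'']
  · rw [le_div_iff₀ ha1']
    have h3 : (lam * (1 - a) ^ 2) * S ≤ (1 - a ^ 2) * S := by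
      have := mul_le_mul_of_nonneg_left hBl hlam.le
      nlinarith [this, hid2]
    have h4 : lam * (1 - a) ^ 2 ≤ 1 - a ^ 2 := le_of_mul_le_mul_right h3 hSpos
    have h5 : (lam * (1 - a)) * (1 - a) ≤ (1 + a) * (1 - a) := by nlinarith [h4]
    linarith [le_of_mul_le_mul_right h5 ha1']


end Stmt12Aux

theorem stmt12 (N : ℕ) (hN : 1 ≤ N) (a : ℝ) (ha0 : 0 ≤ a) (ha1 : a < 1)
    (hR : (expR N a).IsHermitian) (i : Fin N) :
    (1 - a) / (1 + a) ≤ hR.eigenvalues i ∧ hR.eigenvalues i ≤ (1 + a) / (1 - a) := by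
  have hmul := hR.mulVec_eigenvectorBasis i
  have hvne : ⇑(hR.eigenvectorBasis i) ≠ 0 := by
    intro h
    have h1 : hR.eigenvectorBasis i = 0 := by
      ext j
      exact congrFun h j
    have h2 := hR.eigenvectorBasis.orthonormal.ne_zero i
    exact h2 h1
  exact Stmt12Aux.eig N hN a ha0 ha1 (hR.eigenvalues i) (hR.eigenvectorBasis i) hvne hmul
end

section
/- For 0 ≤ a < 1, the N × N matrix R with entries R[i,j] = a^|i-j| is positive definite. -/
open Matrix Finset

section Aux

variable {N : ℕ} {a : ℝ}

/-- The unit upper bidiagonal matrix with `-a` on the superdiagonal. -/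
noncomputable def Tm (N : ℕ) (a : ℝ) : Matrix (Fin N) (Fin N) ℝ :=
  fun i j => if i = j then 1 else if (j : ℕ) = (i : ℕ) + 1 then -a else 0

noncomputable def dv (N : ℕ) (a : ℝ) : Fin N → ℝ :=
  fun i => if (i : ℕ) + 1 = N then 1 else 1 - a ^ 2

lemma sum_indicator (m : ℕ) (f : Fin N → ℝ) :
    (∑ k : Fin N, (if (k : ℕ) = m then f k else 0)) =
      if h : m < N then f ⟨m, h⟩ else 0 := by
  split_ifs with h
  · rw [Finset.sum_eq_single ⟨m, h⟩]
    · simp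
    · intro b _ hb
      rw [if_neg]
      intro hbm
      exact hb (Fin.ext hbm)
    · intro hb; exact absurd (Finset.mem_univ _) hb
  · apply Finset.sum_eq_zero
    intro k _
    rw [if_neg]
    intro hk
    exact h (hk ▸ k.isLt)

lemma Tm_mul_expR (i l : Fin N) :
    (Tm N a * expR N a) i l =
      expR N a i l - a * (if h : (i : ℕ) + 1 < N then expR N a ⟨(i : ℕ) + 1, h⟩ l else 0) := by
  have : ∀ k : Fin N, Tm N a i k * expR N a k l =
      (if (k : ℕ) = (i : ℕ) then expR N a k l else 0) +
      (if (k : ℕ) = (i : ℕ) + 1 then -a * expR N a k l else 0) := by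
    intro k
    simp only [Tm]
    rcases eq_or_ne ((k : ℕ)) ((i : ℕ)) with hk | hk
    · rw [if_pos (Fin.ext hk.symm), if_pos hk, if_neg (by omega)]
      ring
    · rw [if_neg (fun h => hk (congrArg Fin.val h).symm), if_neg hk]
      split_ifs <;> ring
  simp only [Matrix.mul_apply, this, Finset.sum_add_distrib, sum_indicator]
  rw [dif_pos i.isLt]
  have : (⟨(i : ℕ), i.isLt⟩ : Fin N) = i := rfl
  rw [this]
  split_ifs with h
  · ring
  · ring

lemma Tm_mul_expR_eq (i l : Fin N) :
    (Tm N a * expR N a) i l =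
      if (l : ℕ) ≤ (i : ℕ) then
        (if (i : ℕ) + 1 < N then 1 - a ^ 2 else 1) * a ^ ((i : ℕ) - (l : ℕ))
      else 0 := by
  rw [Tm_mul_expR]
  by_cases hN : (i : ℕ) + 1 < N
  · rw [dif_pos hN]
    by_cases hli : (l : ℕ) ≤ (i : ℕ)
    · rw [if_pos hli, if_pos hN]
      simp only [expR, Fin.val_mk]
      rw [show (((i : ℕ) : ℤ) - ((l : ℕ) : ℤ)).natAbs = (i : ℕ) - (l : ℕ) from by omega,
        show ((((i : ℕ) + 1 : ℕ) : ℤ) - ((l : ℕ) : ℤ)).natAbs = ((i : ℕ) - (l : ℕ)) + 1 from by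
          push_cast; omega, pow_succ]
      ring
    · rw [if_neg hli]
      simp only [expR, Fin.val_mk]
      rw [show (((i : ℕ) : ℤ) - ((l : ℕ) : ℤ)).natAbs = (l : ℕ) - (i : ℕ) from by omega,
        show ((((i : ℕ) + 1 : ℕ) : ℤ) - ((l : ℕ) : ℤ)).natAbs = ((l : ℕ) - (i : ℕ)) - 1 from by
          push_cast; omega]
      have h3 : a ^ ((l : ℕ) - (i : ℕ)) = a * a ^ ((l : ℕ) - (i : ℕ) - 1) := by
        rw [← pow_succ']
        congr 1
        omega
      rw [h3]
      ring
  · rw [dif_neg hN]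
    have hli : (l : ℕ) ≤ (i : ℕ) := by have := l.isLt; omega
    rw [if_pos hli, if_neg hN]
    simp only [expR]
    rw [show (((i : ℕ) : ℤ) - ((l : ℕ) : ℤ)).natAbs = (i : ℕ) - (l : ℕ) from by omega]
    ring

lemma key_s13 : Tm N a * expR N a * (Tm N a)ᵀ = Matrix.diagonal (dv N a) := by
  ext i j
  rw [Matrix.mul_apply]
  have hsplit : ∀ l : Fin N, (Tm N a * expR N a) i l * (Tm N a)ᵀ l j =
      (if (l : ℕ) = (j : ℕ) then (Tm N a * expR N a) i l else 0) +
      (if (l : ℕ) = (j : ℕ) + 1 then -a * (Tm N a * expR N a) i l else 0) := by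
    intro l
    simp only [Matrix.transpose_apply, Tm]
    rcases eq_or_ne ((l : ℕ)) ((j : ℕ)) with hl | hl
    · rw [if_pos (Fin.ext hl.symm), if_pos hl, if_neg (by omega)]
      ring
    · rw [if_neg (fun h => hl (congrArg Fin.val h).symm), if_neg hl]
      split_ifs <;> ring
  simp only [hsplit, Finset.sum_add_distrib, sum_indicator]
  rw [dif_pos j.isLt]
  have hjj : (⟨(j : ℕ), j.isLt⟩ : Fin N) = j := rfl
  rw [hjj]
  rcases eq_or_ne i j with rfl | hij
  · rw [Matrix.diagonal_apply_eq]
    by_cases hN : (i : ℕ) + 1 < N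
    · rw [dif_pos hN, Tm_mul_expR_eq, Tm_mul_expR_eq]
      simp only [Fin.val_mk]
      rw [if_pos (le_refl (i : ℕ)), if_neg (show ¬ (i : ℕ) + 1 ≤ (i : ℕ) from by omega)]
      simp only [Nat.sub_self, pow_zero, mul_one, mul_zero, add_zero]
      unfold dv
      split_ifs with h1 h2 <;> first | rfl | omega
    · rw [dif_neg hN, Tm_mul_expR_eq]
      rw [if_pos (le_refl (i : ℕ))]
      simp only [Nat.sub_self, pow_zero, mul_one, add_zero]
      unfold dv
      split_ifs with h1 h2 <;> first | rfl | omega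
  · rw [Matrix.diagonal_apply_ne _ hij]
    rcases lt_or_gt_of_ne (fun h : (i : ℕ) = (j : ℕ) => hij (Fin.ext h)) with hlt | hgt
    · rw [Tm_mul_expR_eq, if_neg (by omega)]
      by_cases h : (j : ℕ) + 1 < N
      · rw [dif_pos h, Tm_mul_expR_eq]
        simp only [Fin.val_mk]
        rw [if_neg (by omega)]
        ring
      · rw [dif_neg h]
        ring
    · have hj1 : (j : ℕ) + 1 < N := by have := i.isLt; omega
      rw [dif_pos hj1, Tm_mul_expR_eq, Tm_mul_expR_eq]
      simp only [Fin.val_mk]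
      rw [if_pos (show (j : ℕ) ≤ (i : ℕ) from by omega),
        if_pos (show (j : ℕ) + 1 ≤ (i : ℕ) from by omega),
        show (i : ℕ) - (j : ℕ) = ((i : ℕ) - ((j : ℕ) + 1)) + 1 from by omega, pow_succ]
      ring

lemma Tm_det : (Tm N a).det = 1 := by
  have h : (Tm N a).BlockTriangular id := by
    intro i j hij
    simp only [id] at hij
    unfold Tm
    rw [if_neg (by exact fun h => absurd h.symm (ne_of_lt hij)), if_neg (by
      intro h
      have : (j : ℕ) < (i : ℕ) := hij
      omega)]
  rw [Matrix.det_of_upperTriangular h]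
  apply Finset.prod_eq_one
  intro i _
  simp [Tm]

lemma posDef_conj {n : Type*} [Fintype n] [DecidableEq n] {M B : Matrix n n ℝ}
    (hM : M.PosDef) (hB : IsUnit B.det) : (B * M * Bᴴ).PosDef := by
  refine Matrix.PosDef.of_dotProduct_mulVec_pos ?_ ?_
  · have := Matrix.isHermitian_conjTranspose_mul_mul Bᴴ hM.1
    rwa [Matrix.conjTranspose_conjTranspose] at this
  · intro x hx
    have hBx : Bᴴ *ᵥ x ≠ 0 := by
      have hinj : Function.Injective (Bᴴ.mulVec) := by
        rw [Matrix.mulVec_injective_iff_isUnit, Matrix.isUnit_iff_isUnit_det,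
          Matrix.det_conjTranspose]
        exact isUnit_star.mpr hB
      intro h
      exact hx (hinj (by simpa using h))
    have := hM.dotProduct_mulVec_pos hBx
    simpa only [star_mulVec, Matrix.dotProduct_mulVec, Matrix.vecMul_vecMul,
      Matrix.conjTranspose_conjTranspose] using this

end Aux

theorem stmt13 (N : ℕ) (a : ℝ) (ha0 : 0 ≤ a) (ha1 : a < 1) :
    (expR N a).PosDef := by
  have hdetT : IsUnit (Tm N a).det := by rw [Tm_det]; exact isUnit_one
  have hTinv : IsUnit (Tm N a) := (Matrix.isUnit_iff_isUnit_det _).mpr hdetT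
  have hD : (Matrix.diagonal (dv N a)).PosDef := by
    apply Matrix.PosDef.diagonal
    intro i
    unfold dv
    split_ifs
    · norm_num
    · nlinarith
  have hkey : Tm N a * expR N a * (Tm N a)ᵀ = Matrix.diagonal (dv N a) := key_s13
  have hR : expR N a = (Tm N a)⁻¹ * Matrix.diagonal (dv N a) * ((Tm N a)⁻¹)ᴴ := by
    have hdetTt : IsUnit ((Tm N a)ᵀ).det := by rwa [Matrix.det_transpose]
    have h1 : (Tm N a)⁻¹ * (Matrix.diagonal (dv N a) * ((Tm N a)ᵀ)⁻¹) = expR N a := by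
      rw [← hkey, Matrix.mul_assoc (Tm N a * expR N a),
        Matrix.mul_nonsing_inv _ hdetTt, Matrix.mul_one,
        Matrix.nonsing_inv_mul_cancel_left _ _ hdetT]
    have hct : ((Tm N a)⁻¹)ᴴ = ((Tm N a)ᵀ)⁻¹ := by
      rw [← Matrix.transpose_nonsing_inv]
      ext i j
      simp [Matrix.conjTranspose_apply]
    rw [hct, ← h1, ← Matrix.mul_assoc]
  rw [hR]
  exact posDef_conj hD ((Matrix.isUnit_nonsing_inv_det _ hdetT))
end

section
/- For 0 ≤ a < 1 and even N, Σ_{i,j=1}^{N} (−1)^(i+j) a^|i−j| = N − 2[Σ_{k=1}^{N/2} (N−(2k−1))a^(2k−1) − Σ_{k=1}^{N/2−1} (N−2k)a^(2k)], and this equals N·[(1−a)/(1+a) + 2a(1−a^N)/(N(1+a)^2)]. -/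
open Matrix Finset

lemma sum_even_odd' (c : ℕ → ℝ) (m : ℕ) :
    ∑ j ∈ Finset.range (2*m), c j
      = ∑ k ∈ Finset.range m, c (2*k) + ∑ k ∈ Finset.range m, c (2*k+1) := by
  induction m with
  | zero => simp
  | succ m ih =>
    rw [show 2*(m+1) = 2*m+1+1 by ring, sum_range_succ, sum_range_succ, ih,
      sum_range_succ, sum_range_succ]
    ring

lemma keyT' (x : ℝ) (N : ℕ) :
    (∑ j ∈ Finset.range N, ((N:ℝ)-1-j)*x^(j+1)) * (1-x)^2
      = N*x*(1-x) - x*(1-x^N) := by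
  induction N with
  | zero => simp
  | succ N ih =>
    have hg := geom_sum_mul x N
    have hsplit : (∑ j ∈ Finset.range (N+1), (((N:ℝ)+1)-1-j)*x^(j+1))
        = (∑ j ∈ Finset.range N, ((N:ℝ)-1-j)*x^(j+1))
          + ∑ j ∈ Finset.range N, x^(j+1) := by
      rw [sum_range_succ]
      have h0 : (((N:ℝ)+1)-1-(N:ℝ))*x^(N+1) = 0 := by ring
      rw [h0, add_zero, ← sum_add_distrib]
      exact sum_congr rfl fun j _ => by ring
    have hxg : (∑ j ∈ Finset.range N, x^(j+1)) = x * ∑ j ∈ Finset.range N, x^j := by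
      rw [mul_sum]; exact sum_congr rfl fun j _ => by ring
    push_cast
    rw [hsplit, hxg]
    linear_combination ih - x*(1-x)*hg

theorem stmt16 (N : ℕ) (hN : Even N) (hN0 : 0 < N) (a : ℝ) (ha0 : 0 ≤ a) (ha1 : a < 1) :
    (∑ i : Fin N, ∑ j : Fin N, (-1 : ℝ) ^ ((i : ℕ) + (j : ℕ)) * expR N a i j) =
        N - 2 * ((∑ k ∈ Finset.Icc 1 (N / 2), ((N : ℝ) - (2 * k - 1)) * a ^ (2 * k - 1)) -
          ∑ k ∈ Finset.Icc 1 (N / 2 - 1), ((N : ℝ) - 2 * k) * a ^ (2 * k)) ∧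
      (∑ i : Fin N, ∑ j : Fin N, (-1 : ℝ) ^ ((i : ℕ) + (j : ℕ)) * expR N a i j) =
        N * ((1 - a) / (1 + a) + 2 * a * (1 - a ^ N) / (N * (1 + a) ^ 2)) := by
  set F : ℕ → ℕ → ℝ := fun i j => (-1:ℝ)^(i+j) * a^(((i:ℤ)-(j:ℤ)).natAbs) with hF
  -- Step 0: the Fin sum equals the range sum
  have h0 : (∑ i : Fin N, ∑ j : Fin N, (-1 : ℝ) ^ ((i : ℕ) + (j : ℕ)) * expR N a i j)
      = ∑ i ∈ range N, ∑ j ∈ range N, F i j := by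
    simp only [expR, hF]
    rw [← Fin.sum_univ_eq_sum_range (fun i => ∑ j ∈ range N,
        (-1:ℝ)^(i+j) * a^(((i:ℤ)-(j:ℤ)).natAbs)) N]
    refine Finset.sum_congr rfl fun i _ => ?_
    rw [← Fin.sum_univ_eq_sum_range (fun j =>
        (-1:ℝ)^((i:ℕ)+j) * a^((((i:ℕ):ℤ)-(j:ℤ)).natAbs)) N]
  -- Step A: reduce to the single sum T
  have hA : ∑ i ∈ range N, ∑ j ∈ range N, F i j
      = (N:ℝ) + 2 * ∑ j ∈ range N, ((N:ℝ)-1-j)*(-a)^(j+1) := by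
    have hsymm : ∀ i j, F j i = F i j := by
      intro i j
      simp only [hF]
      rw [add_comm j i, show ((j:ℤ)-(i:ℤ)).natAbs = ((i:ℤ)-(j:ℤ)).natAbs by omega]
    have hdiag : ∀ i, F i i = 1 := by
      intro i
      simp only [hF, sub_self, Int.natAbs_zero, pow_zero, mul_one]
      exact Even.neg_one_pow ⟨i, rfl⟩
    have hinner : ∀ i, ∑ j ∈ range i, F i j = ∑ j ∈ range i, (-a)^(j+1) := by
      intro i
      have h1 : ∀ j ∈ range i, F i j = (-a)^(i-j) := by
        intro j hj
        have hji : j < i := mem_range.mp hj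
        simp only [hF]
        rw [show (((i:ℤ))-(j:ℤ)).natAbs = i - j by omega,
          show i + j = (i-j) + 2*j by omega, pow_add, pow_mul, neg_pow a (i-j)]
        norm_num
      rw [sum_congr rfl h1, ← Finset.sum_range_reflect (fun j => (-a)^(i-j)) i]
      exact sum_congr rfl fun j hj => by
        have := mem_range.mp hj
        congr 1
        omega
    have h1 : ∀ i ∈ range N, ∑ j ∈ range N, F i j
        = (∑ j ∈ range i, F i j + F i i) + ∑ j ∈ Ico (i+1) N, F i j := by
      intro i hi
      rw [← Finset.sum_range_add_sum_Ico (F i) (mem_range.mp hi), sum_range_succ]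
    rw [sum_congr rfl h1, sum_add_distrib, sum_add_distrib]
    have h2 : ∑ i ∈ range N, ∑ j ∈ Ico (i+1) N, F i j
        = ∑ i ∈ range N, ∑ j ∈ range i, F i j := by
      simp only [range_eq_Ico]
      rw [sum_Ico_Ico_comm' 0 N F]
      exact sum_congr rfl fun j _ => sum_congr rfl fun i _ => hsymm j i
    rw [h2]
    have h3 : ∑ i ∈ range N, F i i = (N:ℝ) := by simp [hdiag]
    rw [h3]
    have h4 : ∑ i ∈ range N, ∑ j ∈ range i, F i j
        = ∑ j ∈ range N, ((N:ℝ)-1-j)*(-a)^(j+1) := by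
      rw [sum_congr rfl fun i _ => hinner i]
      have := sum_Ico_Ico_comm' 0 N (fun i j => (-a:ℝ)^(i+1))
      simp only [range_eq_Ico] at this ⊢
      rw [← this]
      refine sum_congr rfl fun i hi => ?_
      rw [sum_const, Nat.card_Ico, nsmul_eq_mul]
      have hiN : i + 1 ≤ N := by simp only [mem_Ico] at hi; omega
      rw [Nat.cast_sub hiN]
      push_cast
      ring
    rw [h4]
    ring
  rw [h0, hA]
  obtain ⟨m, hm⟩ := hN
  have hNm : N = 2 * m := by omega
  have hm1 : 1 ≤ m := by omega
  -- Step B: the first identity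
  have hB : ∑ j ∈ range N, ((N:ℝ)-1-j)*(-a)^(j+1)
      = (∑ k ∈ Finset.Icc 1 (N / 2 - 1), ((N : ℝ) - 2 * k) * a ^ (2 * k))
        - ∑ k ∈ Finset.Icc 1 (N / 2), ((N : ℝ) - (2 * k - 1)) * a ^ (2 * k - 1) := by
    have hdiv : N / 2 = m := by omega
    have hdiv1 : N / 2 - 1 = m - 1 := by omega
    subst hNm
    rw [hdiv1, hdiv]
    rw [sum_even_odd' (fun j => (((2*m:ℕ):ℝ)-1-j)*(-a)^(j+1)) m]
    have hodd : ∑ k ∈ range m, ((((2*m:ℕ):ℝ)-1-(2*k:ℕ))*(-a)^(2*k+1))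
        = -∑ k ∈ Finset.Icc 1 m, (((2*m:ℕ):ℝ) - (2*k - 1)) * a ^ (2 * k - 1) := by
      rw [← Finset.Ico_add_one_right_eq_Icc, sum_Ico_eq_sum_range, ← Finset.sum_neg_distrib]
      refine sum_congr rfl fun k _ => ?_
      rw [show 2*(1+k)-1 = 2*k+1 by omega, Odd.neg_pow ⟨k, by ring⟩ a]
      push_cast
      ring
    have heven : ∑ k ∈ range m, ((((2*m:ℕ):ℝ)-1-(2*k+1:ℕ))*(-a)^(2*k+1+1))
        = ∑ k ∈ Finset.Icc 1 (m-1), (((2*m:ℕ):ℝ) - 2*k) * a ^ (2 * k) := by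
      rw [← Finset.Ico_add_one_right_eq_Icc, show m-1+1 = m by omega, sum_Ico_eq_sum_range]
      have hstep : ∑ k ∈ range m, ((((2*m:ℕ):ℝ)-1-(2*k+1:ℕ))*(-a)^(2*k+1+1))
          = (∑ k ∈ range (m-1), ((((2*m:ℕ):ℝ)-1-(2*k+1:ℕ))*(-a)^(2*k+1+1)))
            + ((((2*m:ℕ):ℝ)-1-(2*(m-1)+1:ℕ))*(-a)^(2*(m-1)+1+1)) := by
      -- split off top term
        rw [← sum_range_succ (fun k => ((((2*m:ℕ):ℝ)-1-(2*k+1:ℕ))*(-a)^(2*k+1+1))),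
          show m-1+1 = m by omega]
      rw [hstep]
      have htop : ((((2*m:ℕ):ℝ)-1-(2*(m-1)+1:ℕ))*(-a)^(2*(m-1)+1+1)) = 0 := by
        have : ((2*(m-1)+1:ℕ):ℝ) = 2*m-1 := by
          rw [Nat.cast_add, Nat.cast_mul, Nat.cast_sub hm1]
          push_cast
          ring
        rw [this]
        push_cast
        ring
      rw [htop, add_zero]
      refine sum_congr rfl fun k _ => ?_
      rw [show 2*k+1+1 = 2*(1+k) by omega, Even.neg_pow ⟨1+k, by ring⟩ a]
      push_cast
      ring
    rw [hodd, heven]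
    ring
  constructor
  · rw [hB]; ring
  · have hk := keyT' (-a) N
    rw [Even.neg_pow ⟨m, hm⟩ a] at hk
    have ha' : (0:ℝ) < 1 + a := by linarith
    have hane : (1:ℝ) + a ≠ 0 := ne_of_gt ha'
    have hNne : (N:ℝ) ≠ 0 := Nat.cast_ne_zero.mpr (by omega)
    field_simp
    linear_combination 2 * hk
end

section
/- For 0 ≤ a < 1 and N > 1, λ_max(R) − λ_min(R) ≥ (1+a)/(1−a) − 2a(1−a^N)/(N(1−a)^2) − (1−a)/(1+a) − 2a(1−(−a)^N)/(N(1+a)^2), where R is the N × N matrix with R[i,j] = a^|i-j|. -/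
open Matrix Finset

lemma geomG (b : ℝ) (N : ℕ) :
    (1-b) * ∑ j ∈ Finset.range N, b ^ (N - j) = b * (1 - b^N) := by
  have h1 : ∑ j ∈ Finset.range N, b ^ (N - j) = b * ∑ k ∈ Finset.range N, b ^ k := by
    rw [← Finset.sum_range_reflect]
    rw [Finset.mul_sum]
    apply Finset.sum_congr rfl
    intro j hj
    rw [Finset.mem_range] at hj
    rw [← pow_succ']
    congr 1
    omega
  have h2 : (b - 1) * ∑ k ∈ Finset.range N, b ^ k = b^N - 1 := by
    linear_combination geom_sum_mul b N
  rw [h1]; linear_combination (-b) * h2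

lemma keySum (b : ℝ) (N : ℕ) :
    (1-b)^2 * ∑ i ∈ Finset.range N, ∑ j ∈ Finset.range N, b ^ (((i:ℤ) - j).natAbs)
    = N*(1-b^2) - 2*b*(1-b^N) := by
  induction N with
  | zero => simp
  | succ N ih =>
    have hrow : ∀ i ∈ Finset.range N, (((i:ℤ) - (N:ℤ)).natAbs) = N - i := by
      intro i hi; rw [Finset.mem_range] at hi; omega
    have hcol : ∀ j ∈ Finset.range N, ((((N:ℤ)) - j).natAbs) = N - j := by
      intro j hj; rw [Finset.mem_range] at hj; omega
    have hsplit : ∑ i ∈ Finset.range (N+1), ∑ j ∈ Finset.range (N+1), b ^ (((i:ℤ) - j).natAbs)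
        = (∑ i ∈ Finset.range N, ∑ j ∈ Finset.range N, b ^ (((i:ℤ) - j).natAbs))
          + 2 * (∑ j ∈ Finset.range N, b ^ (N - j)) + 1 := by
      rw [Finset.sum_range_succ]
      have h1 : ∀ i ∈ Finset.range N, ∑ j ∈ Finset.range (N+1), b ^ (((i:ℤ) - j).natAbs)
          = (∑ j ∈ Finset.range N, b ^ (((i:ℤ) - j).natAbs)) + b ^ (N - i) := by
        intro i hi
        rw [Finset.sum_range_succ, hrow i hi]
      rw [Finset.sum_congr rfl h1, Finset.sum_add_distrib, Finset.sum_range_succ]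
      have h2 : ∑ j ∈ Finset.range N, b ^ ((((N:ℕ):ℤ) - j).natAbs) = ∑ j ∈ Finset.range N, b ^ (N - j) :=
        Finset.sum_congr rfl (fun j hj => by rw [hcol j hj])
      rw [h2]
      try simp
      try ring
    rw [hsplit]
    push_cast
    linear_combination ih + 2*(1-b)*hG_aux b N
  where hG_aux (b : ℝ) (N : ℕ) := geomG b N

lemma diagIdent {N : ℕ} (A : Matrix (Fin N) (Fin N) ℝ) (hA : A.IsHermitian) (x : Fin N → ℝ) :
    x ⬝ᵥ A *ᵥ x = ∑ k, hA.eigenvalues k *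
      ((Matrix.transpose (hA.eigenvectorUnitary : Matrix (Fin N) (Fin N) ℝ) *ᵥ x) k)^2 := by
  set U : Matrix (Fin N) (Fin N) ℝ := (hA.eigenvectorUnitary : Matrix (Fin N) (Fin N) ℝ) with hUdef
  have hstar : (star (hA.eigenvectorUnitary : Matrix (Fin N) (Fin N) ℝ)) = Uᵀ := by
    rw [star_eq_conjTranspose, conjTranspose_eq_transpose_of_trivial]
  have hspec := hA.spectral_theorem
  rw [Unitary.conjStarAlgAut_apply] at hspec
  rw [hstar] at hspec
  conv_lhs => rw [hspec]
  rw [← mulVec_mulVec, ← mulVec_mulVec, dotProduct_mulVec, ← mulVec_transpose]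
  simp only [mulVec_diagonal, dotProduct, Function.comp]
  congr 1
  ext k
  simp [RCLike.ofReal_real_eq_id]
  ring

lemma normIdent {N : ℕ} (A : Matrix (Fin N) (Fin N) ℝ) (hA : A.IsHermitian) (x : Fin N → ℝ) :
    ∑ k, ((Matrix.transpose (hA.eigenvectorUnitary : Matrix (Fin N) (Fin N) ℝ) *ᵥ x) k)^2
      = x ⬝ᵥ x := by
  set U : Matrix (Fin N) (Fin N) ℝ := (hA.eigenvectorUnitary : Matrix (Fin N) (Fin N) ℝ) with hUdef
  have hUU : U * Uᵀ = 1 := by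
    have := (Matrix.mem_unitaryGroup_iff).mp (hA.eigenvectorUnitary).2
    rwa [star_eq_conjTranspose, conjTranspose_eq_transpose_of_trivial] at this
  have h : ∑ k, ((Uᵀ *ᵥ x) k)^2 = (Uᵀ *ᵥ x) ⬝ᵥ (Uᵀ *ᵥ x) := by
    simp [dotProduct, sq]
  rw [h, dotProduct_mulVec, vecMul_transpose, mulVec_mulVec, hUU, one_mulVec]

lemma rayUpper {N : ℕ} (hN : 0 < N) (A : Matrix (Fin N) (Fin N) ℝ) (hA : A.IsHermitian)
    (x : Fin N → ℝ) : x ⬝ᵥ A *ᵥ x ≤ (⨆ i, hA.eigenvalues i) * (x ⬝ᵥ x) := by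
  haveI : Nonempty (Fin N) := Fin.pos_iff_nonempty.mp hN
  rw [diagIdent A hA x, ← normIdent A hA x, Finset.mul_sum]
  apply Finset.sum_le_sum
  intro k _
  have h1 : hA.eigenvalues k ≤ ⨆ i, hA.eigenvalues i :=
    le_ciSup (Set.finite_range _).bddAbove k
  nlinarith [sq_nonneg ((Matrix.transpose (hA.eigenvectorUnitary : Matrix (Fin N) (Fin N) ℝ) *ᵥ x) k)]

lemma rayLower {N : ℕ} (hN : 0 < N) (A : Matrix (Fin N) (Fin N) ℝ) (hA : A.IsHermitian)
    (x : Fin N → ℝ) : (⨅ i, hA.eigenvalues i) * (x ⬝ᵥ x) ≤ x ⬝ᵥ A *ᵥ x := by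
  haveI : Nonempty (Fin N) := Fin.pos_iff_nonempty.mp hN
  rw [diagIdent A hA x, ← normIdent A hA x, Finset.mul_sum]
  apply Finset.sum_le_sum
  intro k _
  have h1 : (⨅ i, hA.eigenvalues i) ≤ hA.eigenvalues k :=
    ciInf_le (Set.finite_range _).bddBelow k
  nlinarith [sq_nonneg ((Matrix.transpose (hA.eigenvectorUnitary : Matrix (Fin N) (Fin N) ℝ) *ᵥ x) k)]

theorem stmt17 (N : ℕ) (hN : 1 < N) (a : ℝ) (ha0 : 0 ≤ a) (ha1 : a < 1)
    (hR : (expR N a).IsHermitian) :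
    (1 + a) / (1 - a) - 2 * a * (1 - a ^ N) / (N * (1 - a) ^ 2) - (1 - a) / (1 + a) -
        2 * a * (1 - (-a) ^ N) / (N * (1 + a) ^ 2) ≤
      (⨆ i, hR.eigenvalues i) - ⨅ i, hR.eigenvalues i := by
  have hNpos : 0 < N := by omega
  have hNR : (0:ℝ) < N := by exact_mod_cast hNpos
  have hconv : ∀ (f : ℕ → ℕ → ℝ), (∑ i : Fin N, ∑ j : Fin N, f i j)
      = ∑ i ∈ Finset.range N, ∑ j ∈ Finset.range N, f i j := by
    intro f
    rw [Fin.sum_univ_eq_sum_range (fun i => ∑ j : Fin N, f i j)]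
    exact Finset.sum_congr rfl fun i _ => Fin.sum_univ_eq_sum_range _ _
  set S1 : ℝ := ∑ i ∈ Finset.range N, ∑ j ∈ Finset.range N, a ^ (((i:ℤ) - j).natAbs) with hS1def
  set S2 : ℝ := ∑ i ∈ Finset.range N, ∑ j ∈ Finset.range N, (-a) ^ (((i:ℤ) - j).natAbs) with hS2def
  -- Rayleigh with ones vector
  have hones : (fun _ : Fin N => (1:ℝ)) ⬝ᵥ (expR N a) *ᵥ (fun _ => 1) = S1 := by
    simp only [dotProduct, mulVec, expR, one_mul, mul_one]
    exact hconv (fun i j => a ^ (((i:ℤ) - j).natAbs))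
  have honesn : (fun _ : Fin N => (1:ℝ)) ⬝ᵥ (fun _ : Fin N => (1:ℝ)) = N := by
    simp [dotProduct]
  have hup : S1 ≤ (⨆ i, hR.eigenvalues i) * N := by
    have := rayUpper hNpos (expR N a) hR (fun _ => 1)
    rwa [hones, honesn] at this
  -- Rayleigh with alternating vector
  have hterm : ∀ i j : ℕ, ((-1:ℝ))^i * (a ^ (((i:ℤ) - j).natAbs) * (-1:ℝ)^j)
      = (-a) ^ (((i:ℤ) - j).natAbs) := by
    intro i j
    rw [neg_pow]
    have hpar : (i + j) % 2 = (((i:ℤ) - j).natAbs) % 2 := by omega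
    have : ((-1:ℝ))^i * (-1:ℝ)^j = (-1:ℝ) ^ (((i:ℤ) - j).natAbs) := by
      rw [← pow_add]
      rcases Nat.even_or_odd (i + j) with h | h
      · have h2 : Even (((i:ℤ) - j).natAbs) := by
          rcases h with ⟨c, hc⟩; exact ⟨(((i:ℤ) - j).natAbs)/2, by omega⟩
        rw [h.neg_one_pow, h2.neg_one_pow]
      · have h2 : Odd (((i:ℤ) - j).natAbs) := by
          rcases h with ⟨c, hc⟩; exact ⟨(((i:ℤ) - j).natAbs)/2, by omega⟩
        rw [h.neg_one_pow, h2.neg_one_pow]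
    linear_combination (a ^ (((i:ℤ) - j).natAbs)) * this
  have halt : (fun i : Fin N => ((-1:ℝ))^(i:ℕ)) ⬝ᵥ (expR N a) *ᵥ (fun i : Fin N => ((-1:ℝ))^(i:ℕ)) = S2 := by
    simp only [dotProduct, mulVec, expR, Finset.mul_sum]
    have : (∑ i : Fin N, ∑ j : Fin N, ((-1:ℝ))^(i:ℕ) * (a ^ (((i:ℤ) - (j:ℤ)).natAbs) * (-1:ℝ)^(j:ℕ)))
        = ∑ i : Fin N, ∑ j : Fin N, (-a) ^ (((i:ℤ) - (j:ℤ)).natAbs) :=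
      Finset.sum_congr rfl fun i _ => Finset.sum_congr rfl fun j _ => hterm i j
    rw [this]
    exact hconv (fun i j => (-a) ^ (((i:ℤ) - j).natAbs))
  have haltn : (fun i : Fin N => ((-1:ℝ))^(i:ℕ)) ⬝ᵥ (fun i : Fin N => ((-1:ℝ))^(i:ℕ)) = N := by
    simp [dotProduct, ← pow_add, ← two_mul, pow_mul]
  have hlo : (⨅ i, hR.eigenvalues i) * N ≤ S2 := by
    have := rayLower hNpos (expR N a) hR (fun i : Fin N => ((-1:ℝ))^(i:ℕ))
    rwa [halt, haltn] at this
  -- closed forms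
  have h1 := keySum a N
  have h2 := keySum (-a) N
  rw [← hS1def] at h1
  rw [← hS2def] at h2
  have hma : (1 - a) ≠ 0 := by linarith
  have hpa : (1 + a) ≠ 0 := by linarith
  have hS1eq : S1 = (N*(1-a^2) - 2*a*(1-a^N))/(1-a)^2 := by
    field_simp
    linarith [h1]
  have hS2eq : S2 = (N*(1-a^2) + 2*a*(1-(-a)^N))/(1+a)^2 := by
    have hne : ((1:ℝ)+a)^2 ≠ 0 := pow_ne_zero _ hpa
    field_simp
    nlinarith [h2]
  have hEeq : (1 + a) / (1 - a) - 2 * a * (1 - a ^ N) / (N * (1 - a) ^ 2) - (1 - a) / (1 + a) -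
        2 * a * (1 - (-a) ^ N) / (N * (1 + a) ^ 2) = S1 / N - S2 / N := by
    rw [hS1eq, hS2eq]
    field_simp
    ring
  rw [hEeq]
  have hL : S1 / N ≤ ⨆ i, hR.eigenvalues i := by
    rw [div_le_iff₀ hNR]; exact hup
  have hl : (⨅ i, hR.eigenvalues i) ≤ S2 / N := by
    rw [le_div_iff₀ hNR]; exact hlo
  linarith
end

section
/- For 0 ≤ a < 1 and N > 1, the condition number κ(R) = λ_max(R)/λ_min(R) of the N × N matrix R with R[i,j] = a^|i-j| satisfies κ(R) ≤ (1+a)²(1 − a^(N−1))/(1−a)². -/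
open Matrix Finset

namespace Stmt18Aux

variable (a : ℝ)

/-- forward partial geometric sums -/
noncomputable def usum (x : ℕ → ℝ) (j : ℕ) : ℝ :=
  ∑ i ∈ Finset.range (j + 1), a ^ (j - i) * x i

lemma usum_zero (x : ℕ → ℝ) : usum a x 0 = x 0 := by
  simp [usum]

lemma usum_succ (x : ℕ → ℝ) (j : ℕ) :
    usum a x (j + 1) = x (j + 1) + a * usum a x j := by
  rw [usum, Finset.sum_range_succ, usum, Finset.mul_sum]
  rw [Nat.sub_self, pow_zero, one_mul, add_comm]
  congr 1
  refine Finset.sum_congr rfl fun i hi => ?_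
  have hi' : i ≤ j := Nat.lt_succ_iff.mp (Finset.mem_range.mp hi)
  have h : j + 1 - i = (j - i) + 1 := by omega
  rw [h, pow_succ]
  ring

/-- the key sum-of-squares identity -/
lemma identity (x : ℕ → ℝ) (M : ℕ) :
    ∑ i ∈ Finset.range (M + 1), ∑ k ∈ Finset.range (M + 1),
        a ^ (((i : ℤ) - (k : ℤ)).natAbs) * (x i * x k)
      = (1 - a ^ 2) * ∑ j ∈ Finset.range (M + 1), (usum a x j) ^ 2
        + a ^ 2 * (usum a x M) ^ 2 := by
  induction M with
  | zero => simp [usum]; ring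
  | succ M ih =>
      have cross : ∑ i ∈ Finset.range (M + 1), a ^ ((((i:ℕ) : ℤ) - ((M:ℤ) + 1)).natAbs) * x i
          = a * usum a x M := by
        rw [usum, Finset.mul_sum]
        refine Finset.sum_congr rfl fun i hi => ?_
        have hi' : i ≤ M := Nat.lt_succ_iff.mp (Finset.mem_range.mp hi)
        have h1 : (((i:ℕ) : ℤ) - ((M:ℤ) + 1)).natAbs = (M - i) + 1 := by omega
        rw [h1, pow_succ]
        ring
      rw [Finset.sum_range_succ]
      have inner : ∀ i ∈ Finset.range (M + 1),
          ∑ k ∈ Finset.range (M + 2), a ^ (((i : ℤ) - (k : ℤ)).natAbs) * (x i * x k)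
          = (∑ k ∈ Finset.range (M + 1), a ^ (((i : ℤ) - (k : ℤ)).natAbs) * (x i * x k))
            + a ^ ((((i:ℕ) : ℤ) - ((M:ℤ) + 1)).natAbs) * (x i * x (M + 1)) := by
        intro i hi
        rw [Finset.sum_range_succ]
        norm_num
      rw [Finset.sum_congr rfl inner, Finset.sum_add_distrib, ih]
      have c2 : ∑ i ∈ Finset.range (M + 1),
            a ^ ((((i:ℕ) : ℤ) - ((M:ℤ) + 1)).natAbs) * (x i * x (M + 1))
          = (a * usum a x M) * x (M + 1) := by
        rw [← cross, Finset.sum_mul]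
        exact Finset.sum_congr rfl fun i hi => by ring
      have c3 : ∑ k ∈ Finset.range (M + 2),
            a ^ ((((M + 1 : ℕ) : ℤ) - ((k:ℕ) : ℤ)).natAbs) * (x (M + 1) * x k)
          = (a * usum a x M) * x (M + 1) + x (M + 1) * x (M + 1) := by
        rw [Finset.sum_range_succ]
        have h0 : (((M + 1 : ℕ) : ℤ) - ((M + 1 : ℕ) : ℤ)).natAbs = 0 := by omega
        rw [h0, pow_zero, one_mul]
        congr 1
        rw [← c2]
        refine Finset.sum_congr rfl fun k hk => ?_
        have h1 : (((M + 1 : ℕ) : ℤ) - ((k:ℕ) : ℤ)).natAbs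
            = (((k:ℕ) : ℤ) - ((M:ℤ) + 1)).natAbs := by omega
        rw [h1]; ring
      rw [c2, c3]
      rw [Finset.sum_range_succ (fun j => (usum a x j) ^ 2) (M + 1), usum_succ]
      ring

variable {a}

lemma lower_bound (ha0 : 0 ≤ a) (ha1 : a < 1) (x : ℕ → ℝ) (M : ℕ) :
    (1 - a) / (1 + a) * ∑ j ∈ Finset.range (M + 1), (x j) ^ 2
      ≤ ∑ i ∈ Finset.range (M + 1), ∑ k ∈ Finset.range (M + 1),
          a ^ (((i : ℤ) - (k : ℤ)).natAbs) * (x i * x k) := by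
  have h1a : (0:ℝ) < 1 + a := by linarith
  rw [identity a x M]
  -- key : ∑ x² ≤ (1+a)² ∑ u²
  have key : ∑ j ∈ Finset.range (M + 1), (x j) ^ 2
      ≤ (1 + a) ^ 2 * ∑ j ∈ Finset.range (M + 1), (usum a x j) ^ 2 := by
    have hx0 : (x 0) ^ 2 = (usum a x 0) ^ 2 := by rw [usum_zero]
    have hsplit : ∑ j ∈ Finset.range (M + 1), (x j) ^ 2
        = (∑ j ∈ Finset.range M, (x (j + 1)) ^ 2) + (x 0) ^ 2 :=
      Finset.sum_range_succ' _ M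
    have husplit : ∑ j ∈ Finset.range (M + 1), (usum a x j) ^ 2
        = (∑ j ∈ Finset.range M, (usum a x (j + 1)) ^ 2) + (usum a x 0) ^ 2 :=
      Finset.sum_range_succ' _ M
    have hterm : ∀ j ∈ Finset.range M,
        (x (j + 1)) ^ 2 ≤ (1 + a) * (usum a x (j + 1)) ^ 2 + (a + a ^ 2) * (usum a x j) ^ 2 := by
      intro j _
      have hx : x (j + 1) = usum a x (j + 1) - a * usum a x j := by
        rw [usum_succ]; ring
      rw [hx]
      nlinarith [sq_nonneg (usum a x (j + 1) + usum a x j), ha0]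
    have hsum1 : ∑ j ∈ Finset.range M, (x (j + 1)) ^ 2
        ≤ (1 + a) * ∑ j ∈ Finset.range M, (usum a x (j + 1)) ^ 2
          + (a + a ^ 2) * ∑ j ∈ Finset.range M, (usum a x j) ^ 2 := by
      rw [Finset.mul_sum, Finset.mul_sum, ← Finset.sum_add_distrib]
      exact Finset.sum_le_sum hterm
    have hsub : ∑ j ∈ Finset.range M, (usum a x j) ^ 2
        ≤ ∑ j ∈ Finset.range (M + 1), (usum a x j) ^ 2 := by
      apply Finset.sum_le_sum_of_subset_of_nonneg
      · exact Finset.range_subset_range.mpr (Nat.le_succ M)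
      · intro j _ _; positivity
    nlinarith [sq_nonneg (usum a x 0), hsum1, hsub, hsplit, husplit]
  have hL0 : 0 ≤ (1 - a) / (1 + a) := div_nonneg (by linarith) (by linarith)
  calc (1 - a) / (1 + a) * ∑ j ∈ Finset.range (M + 1), (x j) ^ 2
      ≤ (1 - a) / (1 + a) * ((1 + a) ^ 2 * ∑ j ∈ Finset.range (M + 1), (usum a x j) ^ 2) :=
        mul_le_mul_of_nonneg_left key hL0
    _ = (1 - a ^ 2) * ∑ j ∈ Finset.range (M + 1), (usum a x j) ^ 2 := by
        field_simp; ring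
    _ ≤ (1 - a ^ 2) * ∑ j ∈ Finset.range (M + 1), (usum a x j) ^ 2
          + a ^ 2 * (usum a x M) ^ 2 := by nlinarith [sq_nonneg (usum a x M), sq_nonneg a]

lemma row_sum_le (ha0 : 0 ≤ a) (N : ℕ) (hN : 1 < N) (i : ℕ) (hi : i < N) :
    ∑ k ∈ Finset.range N, a ^ (((i : ℤ) - (k : ℤ)).natAbs)
      ≤ (∑ k ∈ Finset.range (N - 1), a ^ k) + ∑ k ∈ Finset.range (N - 1), a ^ (k + 1) := by
  have hsplit : ∑ k ∈ Finset.range N, a ^ (((i : ℤ) - (k : ℤ)).natAbs)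
      = (∑ k ∈ Finset.range (i + 1), a ^ (((i : ℤ) - (k : ℤ)).natAbs))
        + ∑ k ∈ Finset.Ico (i + 1) N, a ^ (((i : ℤ) - (k : ℤ)).natAbs) := by
    rw [Finset.range_eq_Ico, ← Finset.sum_Ico_consecutive _ (Nat.zero_le (i + 1)) hi,
      ← Finset.range_eq_Ico]
  have h1 : ∑ k ∈ Finset.range (i + 1), a ^ (((i : ℤ) - (k : ℤ)).natAbs)
      = ∑ k ∈ Finset.range (i + 1), a ^ k := by
    calc ∑ k ∈ Finset.range (i + 1), a ^ (((i : ℤ) - (k : ℤ)).natAbs)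
        = ∑ k ∈ Finset.range (i + 1), a ^ (i + 1 - 1 - k) := by
          refine Finset.sum_congr rfl fun k hk => ?_
          have hk' : k ≤ i := Nat.lt_succ_iff.mp (Finset.mem_range.mp hk)
          congr 1
          omega
      _ = ∑ k ∈ Finset.range (i + 1), a ^ k := Finset.sum_range_reflect (fun k => a ^ k) (i + 1)
  have h2 : ∑ k ∈ Finset.Ico (i + 1) N, a ^ (((i : ℤ) - (k : ℤ)).natAbs)
      = ∑ k ∈ Finset.range (N - (i + 1)), a ^ (k + 1) := by
    rw [Finset.sum_Ico_eq_sum_range]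
    refine Finset.sum_congr rfl fun k hk => ?_
    congr 1
    omega
  rw [hsplit, h1, h2]
  rcases Nat.lt_or_ge i (N - 1) with h | h
  · refine add_le_add ?_ ?_
    · exact Finset.sum_le_sum_of_subset_of_nonneg (Finset.range_subset_range.mpr (by omega))
        (fun j _ _ => pow_nonneg ha0 j)
    · exact Finset.sum_le_sum_of_subset_of_nonneg (Finset.range_subset_range.mpr (by omega))
        (fun j _ _ => pow_nonneg ha0 (j + 1))
  · -- i = N - 1
    have hie : i = N - 1 := by omega
    have he : N - (i + 1) = 0 := by omega
    rw [he, hie]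
    simp only [Finset.range_zero, Finset.sum_empty, add_zero]
    have hstep : ∑ k ∈ Finset.range (N - 1 + 1), a ^ k
        = (∑ k ∈ Finset.range (N - 1), a ^ k) + a ^ (N - 1) := Finset.sum_range_succ _ _
    rw [hstep]
    gcongr
    have hmem : N - 2 ∈ Finset.range (N - 1) := Finset.mem_range.mpr (by omega)
    calc a ^ (N - 1) = a ^ (N - 2 + 1) := by congr 1; omega
      _ ≤ ∑ k ∈ Finset.range (N - 1), a ^ (k + 1) :=
        Finset.single_le_sum (fun j _ => pow_nonneg ha0 (j + 1)) hmem

lemma upper_bound (ha0 : 0 ≤ a) (N : ℕ) (hN : 1 < N) (x : ℕ → ℝ) :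
    ∑ i ∈ Finset.range N, ∑ k ∈ Finset.range N,
        a ^ (((i : ℤ) - (k : ℤ)).natAbs) * (x i * x k)
      ≤ ((∑ k ∈ Finset.range (N - 1), a ^ k) + ∑ k ∈ Finset.range (N - 1), a ^ (k + 1))
        * ∑ i ∈ Finset.range N, (x i) ^ 2 := by
  set B := (∑ k ∈ Finset.range (N - 1), a ^ k) + ∑ k ∈ Finset.range (N - 1), a ^ (k + 1) with hB
  have step1 : ∑ i ∈ Finset.range N, ∑ k ∈ Finset.range N,
      a ^ (((i : ℤ) - (k : ℤ)).natAbs) * (x i * x k)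
      ≤ ∑ i ∈ Finset.range N, ∑ k ∈ Finset.range N,
        a ^ (((i : ℤ) - (k : ℤ)).natAbs) * (((x i) ^ 2 + (x k) ^ 2) / 2) := by
    refine Finset.sum_le_sum fun i _ => Finset.sum_le_sum fun k _ => ?_
    have hc : (0:ℝ) ≤ a ^ (((i : ℤ) - (k : ℤ)).natAbs) := pow_nonneg ha0 _
    have : x i * x k ≤ ((x i) ^ 2 + (x k) ^ 2) / 2 := by nlinarith [sq_nonneg (x i - x k)]
    exact mul_le_mul_of_nonneg_left this hc
  have step2 : ∑ i ∈ Finset.range N, ∑ k ∈ Finset.range N,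
      a ^ (((i : ℤ) - (k : ℤ)).natAbs) * (((x i) ^ 2 + (x k) ^ 2) / 2)
      = ∑ i ∈ Finset.range N, (∑ k ∈ Finset.range N,
        a ^ (((i : ℤ) - (k : ℤ)).natAbs)) * (x i) ^ 2 := by
    have expand : ∀ i ∈ Finset.range N, ∀ k ∈ Finset.range N,
        a ^ (((i : ℤ) - (k : ℤ)).natAbs) * (((x i) ^ 2 + (x k) ^ 2) / 2)
        = a ^ (((i : ℤ) - (k : ℤ)).natAbs) * (x i) ^ 2 / 2
          + a ^ (((i : ℤ) - (k : ℤ)).natAbs) * (x k) ^ 2 / 2 := fun i _ k _ => by ring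
    calc ∑ i ∈ Finset.range N, ∑ k ∈ Finset.range N,
          a ^ (((i : ℤ) - (k : ℤ)).natAbs) * (((x i) ^ 2 + (x k) ^ 2) / 2)
        = (∑ i ∈ Finset.range N, ∑ k ∈ Finset.range N,
            a ^ (((i : ℤ) - (k : ℤ)).natAbs) * (x i) ^ 2 / 2)
          + ∑ i ∈ Finset.range N, ∑ k ∈ Finset.range N,
            a ^ (((i : ℤ) - (k : ℤ)).natAbs) * (x k) ^ 2 / 2 := by
          rw [← Finset.sum_add_distrib]
          refine Finset.sum_congr rfl fun i hi => ?_
          rw [← Finset.sum_add_distrib]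
          exact Finset.sum_congr rfl fun k hk => expand i hi k hk
      _ = (∑ i ∈ Finset.range N, ∑ k ∈ Finset.range N,
            a ^ (((i : ℤ) - (k : ℤ)).natAbs) * (x i) ^ 2 / 2)
          + ∑ i ∈ Finset.range N, ∑ k ∈ Finset.range N,
            a ^ (((i : ℤ) - (k : ℤ)).natAbs) * (x i) ^ 2 / 2 := by
          congr 1
          rw [Finset.sum_comm]
          refine Finset.sum_congr rfl fun i _ => Finset.sum_congr rfl fun k _ => ?_
          have h1 : (((k:ℕ) : ℤ) - ((i:ℕ) : ℤ)).natAbs = (((i:ℕ) : ℤ) - ((k:ℕ) : ℤ)).natAbs := by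
            omega
          rw [h1]
      _ = ∑ i ∈ Finset.range N, (∑ k ∈ Finset.range N,
            a ^ (((i : ℤ) - (k : ℤ)).natAbs)) * (x i) ^ 2 := by
          rw [← Finset.sum_add_distrib]
          refine Finset.sum_congr rfl fun i _ => ?_
          rw [← Finset.sum_add_distrib, Finset.sum_mul]
          exact Finset.sum_congr rfl fun k _ => by ring
  have step3 : ∑ i ∈ Finset.range N, (∑ k ∈ Finset.range N,
      a ^ (((i : ℤ) - (k : ℤ)).natAbs)) * (x i) ^ 2
      ≤ ∑ i ∈ Finset.range N, B * (x i) ^ 2 := by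
    refine Finset.sum_le_sum fun i hi => ?_
    exact mul_le_mul_of_nonneg_right (row_sum_le ha0 N hN i (Finset.mem_range.mp hi))
      (sq_nonneg _)
  calc _ ≤ _ := step1
    _ = _ := step2
    _ ≤ ∑ i ∈ Finset.range N, B * (x i) ^ 2 := step3
    _ = B * ∑ i ∈ Finset.range N, (x i) ^ 2 := by rw [Finset.mul_sum]

end Stmt18Aux

theorem stmt18 (N : ℕ) (hN : 1 < N) (a : ℝ) (ha0 : 0 ≤ a) (ha1 : a < 1)
    (hR : (expR N a).IsHermitian) :
    (⨆ i, hR.eigenvalues i) / (⨅ i, hR.eigenvalues i) ≤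
      (1 + a) ^ 2 * (1 - a ^ (N - 1)) / (1 - a) ^ 2 := by
  have h1a : (0:ℝ) < 1 + a := by linarith
  have h1a' : (0:ℝ) < 1 - a := by linarith
  haveI : NeZero N := ⟨by omega⟩
  set L : ℝ := (1 - a) / (1 + a) with hLdef
  set U : ℝ := (∑ k ∈ Finset.range (N - 1), a ^ k) + ∑ k ∈ Finset.range (N - 1), a ^ (k + 1)
    with hUdef
  have hLpos : 0 < L := by positivity
  have hUval : U = (1 + a) * (1 - a ^ (N - 1)) / (1 - a) := by
    have hg : ∑ k ∈ Finset.range (N - 1), a ^ k = (a ^ (N - 1) - 1) / (a - 1) :=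
      geom_sum_eq (by linarith) _
    have hg2 : ∑ k ∈ Finset.range (N - 1), a ^ (k + 1)
        = a * ∑ k ∈ Finset.range (N - 1), a ^ k := by
      rw [Finset.mul_sum]
      exact Finset.sum_congr rfl fun k _ => by rw [pow_succ]; ring
    rw [eq_div_iff (by linarith : (1:ℝ) - a ≠ 0), hUdef, hg2, hg]
    have ha1' : a - 1 ≠ 0 := by linarith
    field_simp
    ring
  -- each eigenvalue is between L and U
  have hkey : ∀ i : Fin N, L ≤ hR.eigenvalues i ∧ hR.eigenvalues i ≤ U := by
    intro i
    set v : EuclideanSpace ℝ (Fin N) := hR.eigenvectorBasis i with hv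
    have hnorm : ∑ j : Fin N, (v j) ^ 2 = 1 := by
      have h1 : ‖v‖ = 1 := hR.eigenvectorBasis.orthonormal.1 i
      have h2 : (inner ℝ v v : ℝ) = 1 := by
        rw [real_inner_self_eq_norm_sq, h1]; norm_num
      rw [← h2, PiLp.inner_apply]
      exact Finset.sum_congr rfl fun j _ => by simp [RCLike.inner_apply]
    have heig : hR.eigenvalues i
        = ∑ j : Fin N, ∑ k : Fin N, a ^ (((j : ℤ) - (k : ℤ)).natAbs) * (v j * v k) := by
      rw [hR.eigenvalues_eq i]
      simp only [RCLike.re_to_real, dotProduct, Matrix.mulVec, Pi.star_apply,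
        star_trivial]
      refine Finset.sum_congr rfl fun j _ => ?_
      rw [Finset.mul_sum]
      refine Finset.sum_congr rfl fun k _ => ?_
      show v j * (a ^ (((j : ℤ) - (k : ℤ)).natAbs) * v k) = _
      ring
    -- transfer to ℕ-indexed sums
    set x : ℕ → ℝ := fun n => if h : n < N then v ⟨n, h⟩ else 0 with hx
    have hxv : ∀ j : Fin N, x (j : ℕ) = v j := by
      intro j; rw [hx]; simp [j.isLt]
    have hQ : ∑ j : Fin N, ∑ k : Fin N, a ^ (((j : ℤ) - (k : ℤ)).natAbs) * (v j * v k)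
        = ∑ j ∈ Finset.range N, ∑ k ∈ Finset.range N,
            a ^ (((j : ℤ) - (k : ℤ)).natAbs) * (x j * x k) := by
      rw [← Fin.sum_univ_eq_sum_range (fun j => ∑ k ∈ Finset.range N,
        a ^ ((((j:ℕ) : ℤ) - ((k:ℕ) : ℤ)).natAbs) * (x j * x k))]
      refine Finset.sum_congr rfl fun j _ => ?_
      rw [← Fin.sum_univ_eq_sum_range (fun k => a ^ ((((j:ℕ) : ℤ) - ((k:ℕ) : ℤ)).natAbs)
        * (x j * x k))]
      refine Finset.sum_congr rfl fun k _ => by rw [hxv j, hxv k]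
    have hX : ∑ j ∈ Finset.range N, (x j) ^ 2 = 1 := by
      rw [← Fin.sum_univ_eq_sum_range (fun j => (x j) ^ 2)]
      rw [← hnorm]
      exact Finset.sum_congr rfl fun j _ => by rw [hxv j]
    obtain ⟨M, hM⟩ : ∃ M, N = M + 1 := ⟨N - 1, by omega⟩
    constructor
    · rw [heig, hQ]
      have := Stmt18Aux.lower_bound ha0 ha1 x M
      rw [← hM] at this
      rw [hX] at this
      simpa using this
    · rw [heig, hQ]
      have := Stmt18Aux.upper_bound ha0 N hN x
      rw [hX, mul_one] at this
      exact this
  have hUnn : 0 ≤ U := le_trans hLpos.le (le_trans (hkey ⟨0, by omega⟩).1 (hkey ⟨0, by omega⟩).2)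
  have hsup : (⨆ i, hR.eigenvalues i) ≤ U := ciSup_le fun i => (hkey i).2
  have hinf : L ≤ (⨅ i, hR.eigenvalues i) := le_ciInf fun i => (hkey i).1
  have hdiv : (⨆ i, hR.eigenvalues i) / (⨅ i, hR.eigenvalues i) ≤ U / L :=
    div_le_div₀ hUnn hsup hLpos hinf
  refine le_trans hdiv (le_of_eq ?_)
  rw [hUval, hLdef]
  field_simp
end
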